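/- Let A, B be finite types, ρ a density matrix on A × B, and define the SDP value f̂(ρ) = sup { (1/2)·tr(X + Xᴴ) : C, D, M, N positive semidefinite, C + D = M^{T_B} − N^{T_B}, tr(M + N) ≤ 1, and the block matrix [[ρ, X],[Xᴴ, C^{T_B} − D^{T_B}]] positive semidefinite }. Then for every σ ∈ PPT#_2(A:B), √F(ρ,σ) ≤ f̂(ρ). In particular, E_{#,2}^{1/2}(ρ) = −log sup_{σ ∈ PPT#_2} F(ρ,σ) ≥ −2 log f̂(ρ). -/

import Mathlib

open Matrix
open scoped ComplexOrder

/-- Total positive semidefinite square root: the PSD square root of `M` if `M` is PSD,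
and junk value `0` otherwise. -/
noncomputable def msqrt {n : Type*} [Fintype n] [DecidableEq n]
    (M : Matrix n n ℂ) : Matrix n n ℂ :=
  letI := Classical.dec M.PosSemidef
  if h : M.PosSemidef then
    (h.1.eigenvectorUnitary : Matrix n n ℂ) * diagonal ((↑) ∘ (√·) ∘ h.1.eigenvalues) *
      (star (h.1.eigenvectorUnitary : Matrix n n ℂ))
  else 0

/-- The trace norm `‖M‖₁ = tr √(Mᴴ M)` of a complex matrix, as a real number. -/
noncomputable def traceNorm {n : Type*} [Fintype n] [DecidableEq n]
    (M : Matrix n n ℂ) : ℝ :=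
  (msqrt (Mᴴ * M)).trace.re

/-- The partial transpose over the second party `B`:
`M^{T_B}((a,b),(a',b')) = M((a,b'),(a',b))`. -/
def ptB {A B : Type*} (M : Matrix (A × B) (A × B) ℂ) : Matrix (A × B) (A × B) ℂ :=
  fun x y => M (x.1, y.2) (y.1, x.2)

/-- The matrix absolute value `|M| = √(Mᴴ M)`. -/
noncomputable def matAbs {n : Type*} [Fintype n] [DecidableEq n]
    (M : Matrix n n ℂ) : Matrix n n ℂ :=
  msqrt (Mᴴ * M)

/-- Uhlmann fidelity `F(ρ,σ) = (tr √(√σ ρ √σ))²` between positive semidefinite matrices. -/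
noncomputable def fidelity {n : Type*} [Fintype n] [DecidableEq n]
    (ρ σ : Matrix n n ℂ) : ℝ :=
  ((msqrt (msqrt σ * ρ * msqrt σ)).trace.re) ^ 2

/-- The set `PPT₂(A:B)`: positive semidefinite `σ` such that there exists `ω` with
`−ω ⪯ σ^{T_B} ⪯ ω` and `‖ω^{T_B}‖₁ ≤ 1`. -/
def PPT2set {A B : Type*} [Fintype A] [Fintype B] [DecidableEq A] [DecidableEq B] :
    Set (Matrix (A × B) (A × B) ℂ) :=
  {σ | σ.PosSemidef ∧ ∃ ω : Matrix (A × B) (A × B) ℂ,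
    (ω - ptB σ).PosSemidef ∧ (ω + ptB σ).PosSemidef ∧ traceNorm (ptB ω) ≤ 1}

/-- The set `PPT#₂(A:B)`: positive semidefinite `σ` such that there exists `ω` with
`|σ^{T_B}| ⪯ ω` and `‖ω^{T_B}‖₁ ≤ 1`. -/
def PPThash2set {A B : Type*} [Fintype A] [Fintype B] [DecidableEq A] [DecidableEq B] :
    Set (Matrix (A × B) (A × B) ℂ) :=
  {σ | σ.PosSemidef ∧ ∃ ω : Matrix (A × B) (A × B) ℂ,
    (ω - matAbs (ptB σ)).PosSemidef ∧ traceNorm (ptB ω) ≤ 1}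

/-- The SDP value `f̂(ρ)`: the supremum of `(1/2)·tr(X + Xᴴ)` over `C, D, M, N` positive
semidefinite with `C + D = M^{T_B} − N^{T_B}`, `tr(M + N) ≤ 1`, and
`[[ρ, X],[Xᴴ, C^{T_B} − D^{T_B}]]` positive semidefinite. -/
noncomputable def fhat {A B : Type*} [Fintype A] [Fintype B] [DecidableEq A] [DecidableEq B]
    (ρ : Matrix (A × B) (A × B) ℂ) : ℝ :=
  sSup {v : ℝ | ∃ X C D M N : Matrix (A × B) (A × B) ℂ,
    C.PosSemidef ∧ D.PosSemidef ∧ M.PosSemidef ∧ N.PosSemidef ∧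
    C + D = ptB M - ptB N ∧
    ((M + N).trace).re ≤ 1 ∧
    (Matrix.fromBlocks ρ X Xᴴ (ptB C - ptB D)).PosSemidef ∧
    v = (1 / 2) * ((X + Xᴴ).trace).re}

/-! ### Auxiliary lemmas -/

set_option linter.unusedSectionVars false

section fapp
variable {n : Type*} [Fintype n] [DecidableEq n] {T : Matrix n n ℂ}

/-- apply a real function to a Hermitian matrix spectrally -/
noncomputable def fapp (hT : T.IsHermitian) (g : ℝ → ℝ) : Matrix n n ℂ :=
  (hT.eigenvectorUnitary : Matrix n n ℂ) * diagonal (RCLike.ofReal ∘ g ∘ hT.eigenvalues)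
    * (star (hT.eigenvectorUnitary : Matrix n n ℂ))

lemma fapp_id (hT : T.IsHermitian) : fapp hT (fun t => t) = T := by
  rw [fapp]
  exact hT.spectral_theorem.symm

lemma fapp_congr (hT : T.IsHermitian) {g h : ℝ → ℝ}
    (hgh : ∀ i, g (hT.eigenvalues i) = h (hT.eigenvalues i)) : fapp hT g = fapp hT h := by
  unfold fapp
  have : (RCLike.ofReal ∘ g ∘ hT.eigenvalues : n → ℂ) = RCLike.ofReal ∘ h ∘ hT.eigenvalues := by
    funext i; simp [hgh i]
  rw [this]

lemma fapp_isHermitian (hT : T.IsHermitian) (g : ℝ → ℝ) : (fapp hT g).IsHermitian := by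
  unfold fapp
  simp only [Matrix.IsHermitian, conjTranspose_mul, conjTranspose_conjTranspose,
    star_eq_conjTranspose, diagonal_conjTranspose, mul_assoc]
  have : (star (RCLike.ofReal ∘ g ∘ hT.eigenvalues) : n → ℂ) = RCLike.ofReal ∘ g ∘ hT.eigenvalues := by
    funext i; simp [Function.comp, RCLike.star_def, RCLike.conj_ofReal]
  rw [this]

lemma fapp_posSemidef (hT : T.IsHermitian) {g : ℝ → ℝ}
    (hg : ∀ i, 0 ≤ g (hT.eigenvalues i)) : (fapp hT g).PosSemidef := by
  unfold fapp
  rw [Matrix.star_eq_conjTranspose]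
  refine Matrix.PosSemidef.mul_mul_conjTranspose_same ?_ _
  refine posSemidef_diagonal_iff.mpr fun i ↦ ?_
  rw [Function.comp_apply, Function.comp_apply, RCLike.nonneg_iff]
  simp [hg i]

lemma msqrt_eq (h : T.PosSemidef) : msqrt T = fapp h.1 (fun t => Real.sqrt t) := by
  unfold msqrt
  rw [dif_pos h]
  rfl

open scoped MatrixOrder in
lemma msqrt_unique {P B : Matrix n n ℂ} (hP : P.PosSemidef) (hB : B.PosSemidef)
    (hsq : P ^ 2 = B) : msqrt B = P := by
  have e : msqrt B = CFC.sqrt B := by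
    rw [msqrt_eq hB, CFC.sqrt_eq_real_sqrt B (Matrix.nonneg_iff_posSemidef.mpr hB), cfcₙ_eq_cfc,
      hB.1.cfc_eq, IsHermitian.cfc, Unitary.conjStarAlgAut_apply]
    rfl
  rw [e]
  exact CFC.sqrt_unique (by rw [← sq]; exact hsq) (Matrix.nonneg_iff_posSemidef.mpr hP)

lemma fapp_mul (hT : T.IsHermitian) (g h : ℝ → ℝ) :
    fapp hT g * fapp hT h = fapp hT (fun t => g t * h t) := by
  unfold fapp
  have h1 : (star (hT.eigenvectorUnitary : Matrix n n ℂ)) *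
      (hT.eigenvectorUnitary : Matrix n n ℂ) = 1 :=
    Unitary.coe_star_mul_self hT.eigenvectorUnitary
  calc (hT.eigenvectorUnitary : Matrix n n ℂ) * diagonal (RCLike.ofReal ∘ g ∘ hT.eigenvalues)
        * (star (hT.eigenvectorUnitary : Matrix n n ℂ))
        * ((hT.eigenvectorUnitary : Matrix n n ℂ) * diagonal (RCLike.ofReal ∘ h ∘ hT.eigenvalues)
        * (star (hT.eigenvectorUnitary : Matrix n n ℂ)))
      = (hT.eigenvectorUnitary : Matrix n n ℂ) * (diagonal (RCLike.ofReal ∘ g ∘ hT.eigenvalues)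
        * (((star (hT.eigenvectorUnitary : Matrix n n ℂ)) * (hT.eigenvectorUnitary : Matrix n n ℂ))
        * diagonal (RCLike.ofReal ∘ h ∘ hT.eigenvalues))) * (star (hT.eigenvectorUnitary : Matrix n n ℂ)) := by
        noncomm_ring
    _ = _ := by
        rw [h1, one_mul, diagonal_mul_diagonal]
        congr 2
        funext i j
        simp [diagonal_apply]

lemma fapp_add (hT : T.IsHermitian) (g h : ℝ → ℝ) :
    fapp hT g + fapp hT h = fapp hT (fun t => g t + h t) := by
  unfold fapp
  rw [← add_mul, ← mul_add, diagonal_add]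
  congr 2
  funext i j
  simp [diagonal_apply]

lemma fapp_sub (hT : T.IsHermitian) (g h : ℝ → ℝ) :
    fapp hT g - fapp hT h = fapp hT (fun t => g t - h t) := by
  unfold fapp
  rw [← sub_mul, ← mul_sub, diagonal_sub]
  congr 2
  funext i j
  simp [diagonal_apply]

lemma fapp_one (hT : T.IsHermitian) : fapp hT (fun _ => 1) = 1 := by
  unfold fapp
  have : (RCLike.ofReal ∘ (fun _ => (1:ℝ)) ∘ hT.eigenvalues : n → ℂ) = fun _ => 1 := by
    funext i; simp
  rw [this, diagonal_one, mul_one]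
  exact Unitary.coe_mul_star_self hT.eigenvectorUnitary

lemma fapp_trace (hT : T.IsHermitian) (g : ℝ → ℝ) :
    (fapp hT g).trace = ∑ i, (g (hT.eigenvalues i) : ℂ) := by
  unfold fapp
  rw [Matrix.trace_mul_cycle, Unitary.coe_star_mul_self hT.eigenvectorUnitary, one_mul,
    trace_diagonal]
  simp

lemma fapp_trace_re (hT : T.IsHermitian) (g : ℝ → ℝ) :
    ((fapp hT g).trace).re = ∑ i, g (hT.eigenvalues i) := by
  rw [fapp_trace]
  rw [Complex.re_sum]
  simp

lemma msqrt_fapp (hT : T.IsHermitian) {g : ℝ → ℝ}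
    (hg : ∀ i, 0 ≤ g (hT.eigenvalues i)) :
    msqrt (fapp hT g) = fapp hT (fun t => Real.sqrt (g t)) := by
  have hP : (fapp hT (fun t => Real.sqrt (g t))).PosSemidef :=
    fapp_posSemidef hT (fun i => Real.sqrt_nonneg _)
  have hB : (fapp hT g).PosSemidef := fapp_posSemidef hT hg
  have hsq : (fapp hT (fun t => Real.sqrt (g t))) ^ 2 = fapp hT g := by
    rw [pow_two, fapp_mul]
    exact fapp_congr hT fun i => Real.mul_self_sqrt (hg i)
  exact msqrt_unique hP hB hsq

lemma msqrt_posSemidef (h : T.PosSemidef) : (msqrt T).PosSemidef := by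
  rw [msqrt_eq h]; exact fapp_posSemidef h.1 (fun i => Real.sqrt_nonneg _)

lemma msqrt_isHermitian (h : T.PosSemidef) : (msqrt T).IsHermitian :=
  (msqrt_posSemidef h).1

lemma msqrt_mul_self (h : T.PosSemidef) : msqrt T * msqrt T = T := by
  rw [msqrt_eq h, fapp_mul]
  conv_rhs => rw [← fapp_id h.1]
  exact fapp_congr h.1 fun i => Real.mul_self_sqrt (h.eigenvalues_nonneg i)

lemma matAbs_eq_fapp (hT : T.IsHermitian) : matAbs T = fapp hT (fun t => |t|) := by
  have e0 : fapp hT (fun t => t) * fapp hT (fun t => t) = fapp hT (fun t => t * t) :=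
    fapp_mul hT _ _
  rw [fapp_id] at e0
  have e1 : Tᴴ * T = fapp hT (fun t => t * t) := by
    rw [show Tᴴ = T from hT]; exact e0
  rw [matAbs, e1, msqrt_fapp hT (fun i => mul_self_nonneg _)]
  exact fapp_congr hT fun i => Real.sqrt_mul_self_eq_abs _

lemma matAbs_add_posSemidef (hT : T.IsHermitian) : (matAbs T + T).PosSemidef := by
  have e := fapp_add hT (fun t => |t|) (fun t => t)
  rw [fapp_id] at e
  rw [matAbs_eq_fapp hT, e]
  exact fapp_posSemidef hT (fun i => by
    have := neg_abs_le (hT.eigenvalues i); linarith)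

lemma matAbs_sub_posSemidef (hT : T.IsHermitian) : (matAbs T - T).PosSemidef := by
  have e := fapp_sub hT (fun t => |t|) (fun t => t)
  rw [fapp_id] at e
  rw [matAbs_eq_fapp hT, e]
  exact fapp_posSemidef hT (fun i => by
    have := le_abs_self (hT.eigenvalues i); linarith)

end fapp

section ptBlem
variable {A B : Type*} {M : Matrix (A × B) (A × B) ℂ}

lemma ptB_ptB (M : Matrix (A × B) (A × B) ℂ) : ptB (ptB M) = M := rfl

lemma ptB_trace [Fintype A] [Fintype B] (M : Matrix (A × B) (A × B) ℂ) :
    (ptB M).trace = M.trace := rfl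

lemma ptB_sub (M N : Matrix (A × B) (A × B) ℂ) : ptB (M - N) = ptB M - ptB N := rfl

lemma ptB_isHermitian (h : M.IsHermitian) : (ptB M).IsHermitian := by
  ext x y
  simp only [conjTranspose_apply, ptB]
  conv_rhs => rw [← h]
  simp [conjTranspose_apply]

lemma ptB_one [DecidableEq A] [DecidableEq B] : ptB (1 : Matrix (A × B) (A × B) ℂ) = 1 := by
  ext x y
  simp only [ptB, one_apply, Prod.mk.injEq]
  by_cases hxy : x = y
  · subst hxy; simp
  · have : ¬ (x.1 = y.1 ∧ y.2 = x.2) := by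
      intro ⟨h1, h2⟩
      exact hxy (Prod.ext h1 h2.symm)
    rw [if_neg this, if_neg (by exact fun h => hxy h)]

end ptBlem

section psd
variable {n : Type*} [Fintype n] [DecidableEq n] {M : Matrix n n ℂ}

lemma psd_smul {c : ℝ} (hc : 0 ≤ c) (hM : M.PosSemidef) : ((c:ℂ) • M).PosSemidef := by
  constructor
  · rw [IsHermitian, conjTranspose_smul, hM.1]
    congr 1
    simp
  · intro x
    exact (hM.smul (Complex.zero_le_real.mpr hc)).2 x

lemma star_single_one (i : n) : (star (Pi.single i (1:ℂ)) : n → ℂ) = Pi.single i 1 := by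
  funext j
  rcases eq_or_ne j i with rfl | hj
  · simp
  · simp [Pi.single_apply, hj]

lemma psd_diag_nonneg (hM : M.PosSemidef) (i : n) : 0 ≤ M i i := by
  exact hM.diag_nonneg

lemma psd_trace_re_nonneg (hM : M.PosSemidef) : 0 ≤ M.trace.re := by
  rw [trace, Complex.re_sum]
  refine Finset.sum_nonneg fun i _ => ?_
  exact (Complex.le_def.mp (psd_diag_nonneg hM i)).1

end psd

section blocks
variable {n : Type*} [Fintype n] [DecidableEq n] {ρ σ X Q : Matrix n n ℂ}

lemma feas_block (hρ : ρ.PosSemidef) (hσ : σ.PosSemidef) {U : Matrix n n ℂ}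
    (hU : (1 - Uᴴ * U).PosSemidef) :
    (fromBlocks ρ (msqrt ρ * U * msqrt σ) (msqrt ρ * U * msqrt σ)ᴴ σ).PosSemidef := by
  set r := msqrt ρ with hrdef
  set s := msqrt σ with hsdef
  have hr : rᴴ = r := msqrt_isHermitian hρ
  have hs : sᴴ = s := msqrt_isHermitian hσ
  have hQ : (s * (1 - Uᴴ * U) * s).PosSemidef := by
    have := hU.mul_mul_conjTranspose_same s
    rwa [hs] at this
  set q := msqrt (s * (1 - Uᴴ * U) * s) with hqdef
  have hqq : q * q = s * (1 - Uᴴ * U) * s := msqrt_mul_self hQ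
  have hqh : qᴴ = q := msqrt_isHermitian hQ
  have key : fromBlocks ρ (r * U * s) (r * U * s)ᴴ σ
      = (fromBlocks r (U * s) 0 0)ᴴ * (fromBlocks r (U * s) 0 0)
        + (fromBlocks 0 0 0 q)ᴴ * (fromBlocks 0 0 0 q) := by
    rw [fromBlocks_conjTranspose, fromBlocks_conjTranspose, fromBlocks_multiply,
      fromBlocks_multiply, fromBlocks_add]
    simp only [Matrix.mul_zero, Matrix.zero_mul, add_zero, zero_add, conjTranspose_zero, hr, hqh]
    refine fromBlocks_inj.mpr ⟨(msqrt_mul_self hρ).symm, mul_assoc r U s, ?_, ?_⟩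
    · rw [conjTranspose_mul, conjTranspose_mul, conjTranspose_mul, hr, hs]
      noncomm_ring
    · rw [hqq, conjTranspose_mul, hs]
      calc σ = s * (Uᴴ * U + (1 - Uᴴ * U)) * s := by
              rw [add_sub_cancel, mul_one, msqrt_mul_self hσ]
        _ = s * Uᴴ * (U * s) + s * (1 - Uᴴ * U) * s := by noncomm_ring
  rw [key]
  exact (posSemidef_conjTranspose_mul_self _).add (posSemidef_conjTranspose_mul_self _)

lemma block_trace_bound (h : (fromBlocks ρ X Xᴴ Q).PosSemidef) :
    ((X + Xᴴ).trace).re ≤ ρ.trace.re + Q.trace.re := by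
  have key : ∀ i, (X i i).re + ((Xᴴ) i i).re ≤ (ρ i i).re + (Q i i).re := by
    intro i
    have h2 := h.dotProduct_mulVec_nonneg (Sum.elim (Pi.single i (1:ℂ)) (-(Pi.single i 1)))
    have hstar : (star (Sum.elim (Pi.single i (1:ℂ)) (-(Pi.single i 1))) : n ⊕ n → ℂ)
        = Sum.elim (Pi.single i 1) (-(Pi.single i 1)) := by
      funext j
      cases j with
      | inl a =>
        simp only [Pi.star_apply, Sum.elim_inl]
        exact congrFun (star_single_one i) a
      | inr a =>
        simp only [Pi.star_apply, Sum.elim_inr, Pi.neg_apply, star_neg]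
        exact congrArg Neg.neg (congrFun (star_single_one i) a)
    have hval : (star (Sum.elim (Pi.single i (1:ℂ)) (-(Pi.single i 1))) : n ⊕ n → ℂ) ⬝ᵥ
        (fromBlocks ρ X Xᴴ Q) *ᵥ (Sum.elim (Pi.single i 1) (-(Pi.single i 1)))
        = ρ i i + Q i i - X i i - Xᴴ i i := by
      rw [hstar, fromBlocks_mulVec]
      rw [Sum.elim_comp_inl, Sum.elim_comp_inr, sumElim_dotProduct_sumElim]
      simp only [mulVec_neg, mulVec_single, mul_one, dotProduct_add, dotProduct_neg,
        single_dotProduct, one_mul, neg_dotProduct, neg_neg]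
      simp only [MulOpposite.op_one, one_smul, Matrix.col_apply]
      ring
    rw [hval] at h2
    have := (Complex.le_def.mp h2).1
    simp only [Complex.zero_re, Complex.sub_re, Complex.add_re] at this
    linarith
  have htr : ∀ (M : Matrix n n ℂ), M.trace.re = ∑ i, (M i i).re := fun M => by
    rw [trace, Complex.re_sum]; rfl
  rw [trace_add, Complex.add_re, htr, htr, htr, htr, ← Finset.sum_add_distrib,
    ← Finset.sum_add_distrib]
  exact Finset.sum_le_sum fun i _ => key i

end blocks

lemma sqrt_sub_le (lam eps : ℝ) (hl : 0 ≤ lam) (he : 0 < eps) :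
    Real.sqrt lam - Real.sqrt eps ≤ lam * (1 / Real.sqrt (lam + eps)) := by
  set a := Real.sqrt lam with ha
  set b := Real.sqrt (lam + eps) with hb
  set e := Real.sqrt eps with heq
  have hb0 : 0 < b := Real.sqrt_pos.mpr (by linarith)
  have ha0 : 0 ≤ a := Real.sqrt_nonneg _
  have he0 : 0 ≤ e := Real.sqrt_nonneg _
  have ha2 : a ^ 2 = lam := Real.sq_sqrt hl
  have he2 : e ^ 2 = eps := Real.sq_sqrt he.le
  have hab : a ≤ b := Real.sqrt_le_sqrt (by linarith)
  have hbe : b ≤ a + e := by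
    have h1 : lam + eps ≤ (a + e) ^ 2 := by nlinarith
    calc b ≤ Real.sqrt ((a + e) ^ 2) := Real.sqrt_le_sqrt h1
      _ = a + e := Real.sqrt_sq (by linarith)
  rw [mul_one_div, le_div_iff₀ hb0]
  nlinarith [mul_le_mul_of_nonneg_left hbe ha0, mul_le_mul_of_nonneg_right hab he0]
lemma msqrt_one {n : Type*} [Fintype n] [DecidableEq n] :
    msqrt (1 : Matrix n n ℂ) = 1 := by
  exact msqrt_unique Matrix.PosSemidef.one Matrix.PosSemidef.one (by rw [one_pow])

lemma msqrt_smul {n : Type*} [Fintype n] [DecidableEq n] {M : Matrix n n ℂ}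
    (hM : M.PosSemidef) {a : ℝ} (ha : 0 ≤ a) :
    msqrt (((a ^ 2 : ℝ) : ℂ) • M) = ((a : ℝ) : ℂ) • msqrt M := by
  have hP : (((a : ℝ) : ℂ) • msqrt M).PosSemidef := psd_smul ha (msqrt_posSemidef hM)
  have hB : (((a ^ 2 : ℝ) : ℂ) • M).PosSemidef := psd_smul (by positivity) hM
  have hsq : (((a : ℝ) : ℂ) • msqrt M) ^ 2 = ((a ^ 2 : ℝ) : ℂ) • M := by
    rw [pow_two, smul_mul_assoc, mul_smul_comm, smul_smul, msqrt_mul_self hM,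
      ← Complex.ofReal_mul, ← pow_two]
  exact msqrt_unique hP hB hsq

theorem sqrt_fidelity_le_fhat {A B : Type*}
    [Fintype A] [Fintype B] [DecidableEq A] [DecidableEq B]
    (ρ : Matrix (A × B) (A × B) ℂ) (hρ : ρ.PosSemidef) (htr : ρ.trace = 1) :
    (∀ σ ∈ PPThash2set (A := A) (B := B), Real.sqrt (fidelity ρ σ) ≤ fhat ρ) ∧
      -Real.log (sSup {x : ℝ | ∃ σ ∈ PPThash2set (A := A) (B := B), x = fidelity ρ σ}) ≥
        -2 * Real.log (fhat ρ) := by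
  set S := {v : ℝ | ∃ X C D M N : Matrix (A × B) (A × B) ℂ,
    C.PosSemidef ∧ D.PosSemidef ∧ M.PosSemidef ∧ N.PosSemidef ∧
    C + D = ptB M - ptB N ∧
    ((M + N).trace).re ≤ 1 ∧
    (Matrix.fromBlocks ρ X Xᴴ (ptB C - ptB D)).PosSemidef ∧
    v = (1 / 2) * ((X + Xᴴ).trace).re} with hSdef
  have hfhat : fhat ρ = sSup S := rfl
  -- Upper bound: every element of S is at most 1
  have hbdd : BddAbove S := by
    refine ⟨1, fun v hv => ?_⟩
    obtain ⟨X, C, D, M, N, hC, hD, hM, hN, hsum, htrMN, hblock, hveq⟩ := hv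
    have h1 := block_trace_bound hblock
    have hρre : ρ.trace.re = 1 := by rw [htr]; simp
    have hCD : ((C + D).trace).re ≤ 1 := by
      rw [hsum, trace_sub, ptB_trace, ptB_trace, Complex.sub_re]
      rw [trace_add, Complex.add_re] at htrMN
      have hNre := psd_trace_re_nonneg hN
      linarith
    have hQ : ((ptB C - ptB D).trace).re ≤ 1 := by
      rw [trace_sub, ptB_trace, ptB_trace, Complex.sub_re]
      rw [trace_add, Complex.add_re] at hCD
      have hDre := psd_trace_re_nonneg hD
      linarith
    rw [hveq]
    linarith
  -- part 1
  have part1 : ∀ σ ∈ PPThash2set (A := A) (B := B), Real.sqrt (fidelity ρ σ) ≤ fhat ρ := by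
    rintro σ ⟨hσ, ω, hω1, hω2⟩
    have hσT : (ptB σ).IsHermitian := ptB_isHermitian hσ.1
    have hωH : ω.IsHermitian := by
      have h3 : (matAbs (ptB σ)).IsHermitian := by
        rw [matAbs_eq_fapp hσT]; exact fapp_isHermitian hσT _
      have h2 := hω1.1.add h3
      rwa [sub_add_cancel] at h2
    have hωT : (ptB ω).IsHermitian := ptB_isHermitian hωH
    -- the C, D, M, N matrices
    set C := ((2⁻¹:ℝ):ℂ) • (ω + ptB σ) with hCdef
    set D := ((2⁻¹:ℝ):ℂ) • (ω - ptB σ) with hDdef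
    set M := ((2⁻¹:ℝ):ℂ) • (matAbs (ptB ω) + ptB ω) with hMdef
    set N := ((2⁻¹:ℝ):ℂ) • (matAbs (ptB ω) - ptB ω) with hNdef
    have hC : C.PosSemidef := by
      have h := hω1.add (matAbs_add_posSemidef hσT)
      have e : (ω - matAbs (ptB σ)) + (matAbs (ptB σ) + ptB σ) = ω + ptB σ := by abel
      rw [e] at h
      exact psd_smul (by norm_num) h
    have hD : D.PosSemidef := by
      have h := hω1.add (matAbs_sub_posSemidef hσT)
      have e : (ω - matAbs (ptB σ)) + (matAbs (ptB σ) - ptB σ) = ω - ptB σ := by abel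
      rw [e] at h
      exact psd_smul (by norm_num) h
    have hM : M.PosSemidef := psd_smul (by norm_num) (matAbs_add_posSemidef hωT)
    have hN : N.PosSemidef := psd_smul (by norm_num) (matAbs_sub_posSemidef hωT)
    have half2 : ((2⁻¹:ℝ):ℂ) * 2 = 1 := by norm_num
    have hCDsum : C + D = ω := by
      rw [hCdef, hDdef, ← smul_add]
      have e : (ω + ptB σ) + (ω - ptB σ) = (2:ℂ) • ω := by
        rw [two_smul]; abel
      rw [e, smul_smul, half2, one_smul]
    have hCDsub : C - D = ptB σ := by
      rw [hCdef, hDdef, ← smul_sub]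
      have e : (ω + ptB σ) - (ω - ptB σ) = (2:ℂ) • ptB σ := by
        rw [two_smul]; abel
      rw [e, smul_smul, half2, one_smul]
    have hMNsum : M + N = matAbs (ptB ω) := by
      rw [hMdef, hNdef, ← smul_add]
      have e : (matAbs (ptB ω) + ptB ω) + (matAbs (ptB ω) - ptB ω)
          = (2:ℂ) • matAbs (ptB ω) := by rw [two_smul]; abel
      rw [e, smul_smul, half2, one_smul]
    have hMNsub : M - N = ptB ω := by
      rw [hMdef, hNdef, ← smul_sub]
      have e : (matAbs (ptB ω) + ptB ω) - (matAbs (ptB ω) - ptB ω) = (2:ℂ) • ptB ω := by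
        rw [two_smul]; abel
      rw [e, smul_smul, half2, one_smul]
    have hfeas1 : C + D = ptB M - ptB N := by
      rw [hCDsum, ← ptB_sub, hMNsub, ptB_ptB]
    have hfeas2 : ((M + N).trace).re ≤ 1 := by
      rw [hMNsum]
      exact hω2
    have hPT : ptB C - ptB D = σ := by
      rw [← ptB_sub, hCDsub, ptB_ptB]
    -- spectral data of H = √σ ρ √σ
    set s := msqrt σ with hsdef
    have hs : sᴴ = s := msqrt_isHermitian hσ
    have hH : (s * ρ * s).PosSemidef := by
      have := hρ.mul_mul_conjTranspose_same s
      rwa [hs] at this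
    set H := s * ρ * s with hHdef
    have hHh : H.IsHermitian := hH.1
    set lam := hHh.eigenvalues with hlamdef
    have hlam : ∀ i, 0 ≤ lam i := hH.eigenvalues_nonneg
    set F1 := ∑ i, Real.sqrt (lam i) with hF1def
    have hmsq : msqrt H = fapp hHh (fun t => Real.sqrt t) := by
      have e : H = fapp hHh (fun t => t) := (fapp_id hHh).symm
      calc msqrt H = msqrt (fapp hHh (fun t => t)) := by rw [← e]
        _ = fapp hHh (fun t => Real.sqrt t) := msqrt_fapp hHh hlam
    have hfid : Real.sqrt (fidelity ρ σ) = F1 := by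
      rw [fidelity]
      rw [show msqrt σ * ρ * msqrt σ = H from rfl]
      rw [hmsq, fapp_trace_re hHh]
      exact Real.sqrt_sq (Finset.sum_nonneg fun i _ => Real.sqrt_nonneg _)
    rw [hfid]
    -- show F1 ≤ fhat ρ via ε-feasible points
    by_contra hcon
    push_neg at hcon
    set δ := (F1 - fhat ρ) / 2 with hδdef
    have hδ : 0 < δ := by simp only [hδdef]; linarith
    set ε := (δ / (Fintype.card (A × B) + 1)) ^ 2 with hεdef
    have hε0 : 0 < ε := by positivity
    set g : ℝ → ℝ := fun t => 1 / Real.sqrt (t + ε) with hgdef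
    have hg0 : ∀ i, 0 ≤ g (lam i) := fun i => by positivity
    set R := fapp hHh g with hRdef
    set r := msqrt ρ with hrdef
    have hr : rᴴ = r := msqrt_isHermitian hρ
    have hrr : r * r = ρ := msqrt_mul_self hρ
    set U := r * s * R with hUdef
    set X := r * U * s with hXdef
    have hRh : Rᴴ = R := fapp_isHermitian hHh g
    have hUU : Uᴴ * U = fapp hHh (fun t => g t * t * g t) := by
      have e1 : Uᴴ * U = R * H * R := by
        rw [hUdef]
        calc (r * s * R)ᴴ * (r * s * R)
            = R * (s * (r * r) * s) * R := by
              rw [conjTranspose_mul, conjTranspose_mul, hRh, hs, hr]; noncomm_ring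
          _ = R * H * R := by rw [hrr]
      rw [e1]
      have e2 : H = fapp hHh (fun t => t) := (fapp_id hHh).symm
      calc R * H * R = fapp hHh g * fapp hHh (fun t => t) * fapp hHh g := by rw [← e2, hRdef]
        _ = fapp hHh (fun t => g t * t) * fapp hHh g := by rw [fapp_mul]
        _ = fapp hHh (fun t => g t * t * g t) := by rw [fapp_mul]
    have hU : (1 - Uᴴ * U).PosSemidef := by
      have e : (1 : Matrix (A × B) (A × B) ℂ) - Uᴴ * U
          = fapp hHh (fun t => 1 - g t * t * g t) := by
        rw [hUU, ← fapp_one hHh, fapp_sub]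
      rw [e]
      refine fapp_posSemidef hHh fun i => ?_
      have hp : 0 < lam i + ε := by have := hlam i; linarith
      have hsq : Real.sqrt (lam i + ε) * Real.sqrt (lam i + ε) = lam i + ε :=
        Real.mul_self_sqrt hp.le
      have e2 : g (lam i) * lam i * g (lam i) = lam i / (lam i + ε) := by
        rw [hgdef]
        calc (1 / Real.sqrt (lam i + ε)) * lam i * (1 / Real.sqrt (lam i + ε))
            = lam i / (Real.sqrt (lam i + ε) * Real.sqrt (lam i + ε)) := by ring
          _ = lam i / (lam i + ε) := by rw [hsq]
      rw [e2, sub_nonneg]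
      rw [div_le_one hp]
      linarith
    have hblock : (fromBlocks ρ X Xᴴ (ptB C - ptB D)).PosSemidef := by
      rw [hPT]
      exact feas_block hρ hσ hU
    -- the value of this feasible point
    have htrX : X.trace = ∑ i, ((lam i * g (lam i) : ℝ) : ℂ) := by
      have e1 : X.trace = (H * R).trace := by
        calc X.trace = (r * (r * s * R) * s).trace := rfl
          _ = (s * r * (r * s * R)).trace := trace_mul_cycle r (r * s * R) s
          _ = (H * R).trace := by
              congr 1
              calc s * r * (r * s * R) = s * (r * r) * s * R := by noncomm_ring
                _ = s * ρ * s * R := by rw [hrr]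
      rw [e1]
      have e2 : H * R = fapp hHh (fun t => t * g t) := by
        conv_lhs => rw [show H = fapp hHh (fun t => t) from (fapp_id hHh).symm, hRdef]
        rw [fapp_mul]
      rw [e2, fapp_trace]
    have hval : (1 / 2 : ℝ) * ((X + Xᴴ).trace).re = ∑ i, lam i * g (lam i) := by
      rw [trace_add, trace_conjTranspose, Complex.add_re]
      have : (star X.trace).re = X.trace.re := Complex.conj_re _
      rw [this, htrX, Complex.re_sum]
      simp only [Complex.ofReal_re]
      ring
    have hmem : (1 / 2 : ℝ) * ((X + Xᴴ).trace).re ∈ S := by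
      exact ⟨X, C, D, M, N, hC, hD, hM, hN, hfeas1, hfeas2, hblock, rfl⟩
    have hle := le_csSup hbdd hmem
    rw [← hfhat] at hle
    -- lower bound the value
    have hsqrtε : Real.sqrt ε = δ / (Fintype.card (A × B) + 1) := by
      rw [hεdef]
      exact Real.sqrt_sq (by positivity)
    have hlow : F1 - (Fintype.card (A × B) : ℝ) * Real.sqrt ε
        ≤ ∑ i, lam i * g (lam i) := by
      have : ∀ i : A × B, Real.sqrt (lam i) - Real.sqrt ε ≤ lam i * g (lam i) := fun i =>
        sqrt_sub_le (lam i) ε (hlam i) hε0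
      calc F1 - (Fintype.card (A × B) : ℝ) * Real.sqrt ε
          = ∑ i : A × B, (Real.sqrt (lam i) - Real.sqrt ε) := by
            rw [Finset.sum_sub_distrib, hF1def]
            congr 1
            rw [Finset.sum_const, Finset.card_univ, nsmul_eq_mul]
        _ ≤ ∑ i, lam i * g (lam i) := Finset.sum_le_sum fun i _ => this i
    have hcard_bound : (Fintype.card (A × B) : ℝ) * Real.sqrt ε ≤ δ := by
      rw [hsqrtε]
      rw [div_eq_mul_inv, ← mul_assoc]
      rw [mul_comm (Fintype.card (A × B) : ℝ) δ, mul_assoc]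
      have h1 : (Fintype.card (A × B) : ℝ) * ((Fintype.card (A × B) : ℝ) + 1)⁻¹ ≤ 1 := by
        have hpos : (0:ℝ) < (Fintype.card (A × B) : ℝ) + 1 := by positivity
        rw [← div_eq_mul_inv, div_le_one hpos]
        linarith
      calc δ * ((Fintype.card (A × B) : ℝ) * ((Fintype.card (A × B) : ℝ) + 1)⁻¹)
          ≤ δ * 1 := by
            refine mul_le_mul_of_nonneg_left ?_ hδ.le
            exact h1
        _ = δ := mul_one δ
    -- contradiction
    rw [hval] at hle
    have : F1 ≤ fhat ρ + δ := by linarith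
    rw [hδdef] at this
    linarith
  refine ⟨part1, ?_⟩
  -- part 2
  have hcard : 0 < Fintype.card (A × B) := by
    by_contra h
    push_neg at h
    have h0 : Fintype.card (A × B) = 0 := Nat.le_zero.mp h
    haveI := Fintype.card_eq_zero_iff.mp h0
    have hz : ρ.trace = 0 := by
      rw [trace, Finset.univ_eq_empty, Finset.sum_empty]
    rw [htr] at hz
    exact one_ne_zero hz
  set c := ((Fintype.card (A × B) : ℝ))⁻¹ with hcdef
  have hc0 : 0 < c := by
    rw [hcdef]
    positivity
  set σ₀ := ((c : ℝ) : ℂ) • (1 : Matrix (A × B) (A × B) ℂ) with hσ₀def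
  have hσ₀ : σ₀.PosSemidef := psd_smul hc0.le Matrix.PosSemidef.one
  have hptB₀ : ptB σ₀ = σ₀ := by
    rw [hσ₀def]
    have e : ptB ((c : ℂ) • (1 : Matrix (A × B) (A × B) ℂ))
        = (c : ℂ) • ptB (1 : Matrix (A × B) (A × B) ℂ) := rfl
    rw [e, ptB_one]
  have hmatAbs₀ : matAbs σ₀ = σ₀ := by
    have e1 : σ₀ᴴ * σ₀ = ((c ^ 2 : ℝ) : ℂ) • (1 : Matrix (A × B) (A × B) ℂ) := by
      rw [hσ₀.1, hσ₀def, smul_mul_assoc, mul_smul_comm, smul_smul, one_mul,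
        ← Complex.ofReal_mul, ← pow_two]
    rw [matAbs, e1, msqrt_smul Matrix.PosSemidef.one hc0.le, msqrt_one]
  have htn₀ : traceNorm (ptB σ₀) ≤ 1 := by
    have e : traceNorm (ptB σ₀) = (σ₀.trace).re := by
      rw [traceNorm, hptB₀, show msqrt (σ₀ᴴ * σ₀) = matAbs σ₀ from rfl, hmatAbs₀]
    rw [e, hσ₀def, trace_smul, trace_one, smul_eq_mul]
    have : ((c : ℂ) * (Fintype.card (A × B) : ℂ)).re = c * (Fintype.card (A × B) : ℝ) := by
      norm_cast
    rw [this, hcdef]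
    rw [inv_mul_cancel₀ (by positivity : (Fintype.card (A × B) : ℝ) ≠ 0)]
  have hσ₀mem : σ₀ ∈ PPThash2set (A := A) (B := B) := by
    refine ⟨hσ₀, σ₀, ?_, htn₀⟩
    rw [hptB₀, hmatAbs₀, sub_self]
    exact Matrix.PosSemidef.zero
  -- fidelity ρ σ₀ > 0
  have hsqrtσ₀ : msqrt σ₀ = ((Real.sqrt c : ℝ) : ℂ) • (1 : Matrix (A × B) (A × B) ℂ) := by
    have e : σ₀ = ((Real.sqrt c ^ 2 : ℝ) : ℂ) • (1 : Matrix (A × B) (A × B) ℂ) := by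
      rw [Real.sq_sqrt hc0.le]
    rw [e, msqrt_smul Matrix.PosSemidef.one (Real.sqrt_nonneg c), msqrt_one]
  have hmid : msqrt σ₀ * ρ * msqrt σ₀ = ((c : ℝ) : ℂ) • ρ := by
    rw [hsqrtσ₀, smul_mul_assoc, smul_mul_assoc, one_mul, mul_smul_comm, mul_one, smul_smul,
      ← Complex.ofReal_mul, Real.mul_self_sqrt hc0.le]
  have hmsqmid : msqrt (((c : ℝ) : ℂ) • ρ) = ((Real.sqrt c : ℝ) : ℂ) • msqrt ρ := by
    have e : ((c : ℝ) : ℂ) • ρ = ((Real.sqrt c ^ 2 : ℝ) : ℂ) • ρ := by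
      rw [Real.sq_sqrt hc0.le]
    rw [e, msqrt_smul hρ (Real.sqrt_nonneg c)]
  have hρh : ρ.IsHermitian := hρ.1
  have hmsρ : msqrt ρ = fapp hρh (fun t => Real.sqrt t) := by
    have e : ρ = fapp hρh (fun t => t) := (fapp_id hρh).symm
    calc msqrt ρ = msqrt (fapp hρh (fun t => t)) := by rw [← e]
      _ = fapp hρh (fun t => Real.sqrt t) := msqrt_fapp hρh hρ.eigenvalues_nonneg
  have htrρ : ∑ i, hρh.eigenvalues i = 1 := by
    have e := fapp_trace_re hρh (fun t => t)
    rw [fapp_id hρh, htr] at e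
    simpa using e.symm
  have hex : ∃ i, 0 < hρh.eigenvalues i := by
    by_contra h
    push_neg at h
    have hzero : ∑ i, hρh.eigenvalues i = 0 :=
      Finset.sum_eq_zero fun i _ => le_antisymm (h i) (hρ.eigenvalues_nonneg i)
    rw [htrρ] at hzero
    exact one_ne_zero hzero
  obtain ⟨i₀, hi₀⟩ := hex
  have htrsq : 0 < ((msqrt ρ).trace).re := by
    rw [hmsρ, fapp_trace_re]
    have h1 : Real.sqrt (hρh.eigenvalues i₀) ≤ ∑ i, Real.sqrt (hρh.eigenvalues i) :=
      Finset.single_le_sum (fun i _ => Real.sqrt_nonneg _) (Finset.mem_univ i₀)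
    have h0 : 0 < Real.sqrt (hρh.eigenvalues i₀) := Real.sqrt_pos.mpr hi₀
    linarith
  have hfidval : fidelity ρ σ₀ = c * (((msqrt ρ).trace).re) ^ 2 := by
    rw [fidelity, hmid, hmsqmid, trace_smul, smul_eq_mul]
    rw [Complex.re_ofReal_mul, mul_pow, Real.sq_sqrt hc0.le]
  have hfidpos : 0 < fidelity ρ σ₀ := by rw [hfidval]; positivity
  set Sσ := {x : ℝ | ∃ σ ∈ PPThash2set (A := A) (B := B), x = fidelity ρ σ} with hSσ
  have hfhat_pos : 0 < fhat ρ :=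
    lt_of_lt_of_le (Real.sqrt_pos.mpr hfidpos) (part1 σ₀ hσ₀mem)
  have hboundF : ∀ x ∈ Sσ, x ≤ (fhat ρ) ^ 2 := by
    rintro x ⟨σ, hσm, rfl⟩
    have h1 := part1 σ hσm
    have h2 : 0 ≤ fidelity ρ σ := by rw [fidelity]; positivity
    calc fidelity ρ σ = (Real.sqrt (fidelity ρ σ)) ^ 2 := (Real.sq_sqrt h2).symm
      _ ≤ (fhat ρ) ^ 2 := pow_le_pow_left₀ (Real.sqrt_nonneg _) h1 2
  have hbddF : BddAbove Sσ := ⟨(fhat ρ) ^ 2, fun x hx => hboundF x hx⟩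
  have hmemF : fidelity ρ σ₀ ∈ Sσ := ⟨σ₀, hσ₀mem, rfl⟩
  have hsup_pos : 0 < sSup Sσ := lt_of_lt_of_le hfidpos (le_csSup hbddF hmemF)
  have hsup_le : sSup Sσ ≤ (fhat ρ) ^ 2 := csSup_le ⟨_, hmemF⟩ hboundF
  have hlog := Real.log_le_log hsup_pos hsup_le
  rw [Real.log_pow] at hlog
  push_cast at hlog
  linarith
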